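/- arXiv:2010.12541 — 3 statements merged into one kernel-verified Lean document; each statement's English description precedes it below -/
import Mathlib

section
/- Let u be a C^1 function on an open set containing the closed parallelogram A spanned by the segment ξ = [0,l]×{0} (l>0) and a vector z = (z1,z2) with z2>0. Then |∫_{ξ+z} u dx − ∫_ξ u dx| ≤ (|z|/z2) ∫_A |∇u| dx dy, i.e. |∫_0^l u(x+z1, z2) dx − ∫_0^l u(x,0) dx| ≤ (|z|/z2) ∫_A |∇u|. -/
open Set MeasureTheory Real

noncomputable section

/-- A point of the Euclidean plane given by its two coordinates. -/
def pt (x y : ℝ) : EuclideanSpace ℝ (Fin 2) := (WithLp.equiv 2 (Fin 2 → ℝ)).symm ![x, y]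

lemma pt_line (x y a b s : ℝ) : pt x y + s • pt a b = pt (x + s*a) (y + s*b) := by
  ext i; fin_cases i <;> simp [pt, mul_comm]

def Tmap (z1 z2 : ℝ) : EuclideanSpace ℝ (Fin 2) →ₗ[ℝ] EuclideanSpace ℝ (Fin 2) where
  toFun p := pt (p 0 + p 1 * z1) (p 1 * z2)
  map_add' p q := by ext i; fin_cases i <;> simp [pt] <;> ring
  map_smul' c p := by ext i; fin_cases i <;> simp [pt] <;> ring

lemma det_Tmap (z1 z2 : ℝ) : LinearMap.det (Tmap z1 z2) = z2 := by
  rw [← LinearMap.det_toMatrix (PiLp.basisFun 2 ℝ (Fin 2))]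
  have h : (LinearMap.toMatrix (PiLp.basisFun 2 ℝ (Fin 2)) (PiLp.basisFun 2 ℝ (Fin 2))) (Tmap z1 z2) = !![1, z1; 0, z2] := by
    ext i j
    rw [LinearMap.toMatrix_apply]
    fin_cases i <;> fin_cases j <;>
      simp [Tmap, pt, PiLp.basisFun_repr, PiLp.basisFun_apply, Pi.single]
  rw [h, Matrix.det_fin_two_of]; ring

lemma continuous_pt {α : Type*} [TopologicalSpace α] {f g : α → ℝ} (hf : Continuous f)
    (hg : Continuous g) : Continuous fun x => pt (f x) (g x) := by
  unfold pt
  refine (PiLp.continuous_toLp 2 (fun _ : Fin 2 => ℝ)).comp ?_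
  refine continuous_pi fun i => ?_
  fin_cases i <;> simpa

/-- Translation estimate: for `u` of class `C¹` on an open set containing the closed
parallelogram `A` spanned by the segment `ξ = [0,l] × {0}` and the vector `z = (z1, z2)`
with `z2 > 0`, the difference of the integrals of `u` over `ξ + z` and over `ξ` is bounded
by `(|z|/z2) ∫_A |∇u|`. -/
theorem translation_estimate (l z1 z2 : ℝ) (hl : 0 < l) (hz2 : 0 < z2)
    (A : Set (EuclideanSpace ℝ (Fin 2)))
    (hA : A = {p | ∃ x ∈ Icc (0:ℝ) l, ∃ s ∈ Icc (0:ℝ) 1, p = pt (x + s * z1) (s * z2)})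
    (U : Set (EuclideanSpace ℝ (Fin 2))) (hU : IsOpen U) (hAU : A ⊆ U)
    (u : EuclideanSpace ℝ (Fin 2) → ℝ) (hu : ContDiffOn ℝ 1 u U) :
    |(∫ x in (0:ℝ)..l, u (pt (x + z1) z2)) - ∫ x in (0:ℝ)..l, u (pt x 0)|
      ≤ (Real.sqrt (z1 ^ 2 + z2 ^ 2) / z2) * ∫ p in A, ‖fderiv ℝ u p‖ := by
  have hl' : (0:ℝ) ≤ l := hl.le
  set v : EuclideanSpace ℝ (Fin 2) := pt z1 z2 with hv
  have hnv : ‖v‖ = Real.sqrt (z1^2 + z2^2) := by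
    simp [hv, EuclideanSpace.norm_eq, pt, Fin.sum_univ_two, sq_abs]
  set D : EuclideanSpace ℝ (Fin 2) → (EuclideanSpace ℝ (Fin 2) →L[ℝ] ℝ) := fderiv ℝ u with hD
  have hDcont : ContinuousOn D U := hu.continuousOn_fderiv_of_isOpen hU le_rfl
  have hucont : ContinuousOn u U := hu.continuousOn
  have hmem : ∀ x ∈ Icc (0:ℝ) l, ∀ s ∈ Icc (0:ℝ) 1, pt (x + s*z1) (s*z2) ∈ A := by
    intro x hx s hs; rw [hA]; exact ⟨x, hx, s, hs, rfl⟩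
  set P : ℝ × ℝ → EuclideanSpace ℝ (Fin 2) := fun q => pt (q.1 + q.2*z1) (q.2*z2) with hPdef
  have hPcont : Continuous P :=
    continuous_pt (by fun_prop) (by fun_prop)
  set S : Set (ℝ × ℝ) := Icc (0:ℝ) l ×ˢ Icc (0:ℝ) 1 with hSdef
  have hPS : ∀ q ∈ S, P q ∈ A := fun q hq => hmem _ hq.1 _ hq.2
  set F : ℝ × ℝ → ℝ := fun q => (D (P q)) v with hFdef
  set G : ℝ × ℝ → ℝ := fun q => ‖D (P q)‖ with hGdef
  have hDPcont : ContinuousOn (fun q => D (P q)) S :=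
    hDcont.comp hPcont.continuousOn (fun q hq => hAU (hPS q hq))
  have hFcont : ContinuousOn F S := hDPcont.clm_apply continuousOn_const
  have hGcont : ContinuousOn G S := hDPcont.norm
  -- FTC along segments
  have key : ∀ x ∈ Icc (0:ℝ) l,
      u (pt (x + z1) z2) - u (pt x 0) = ∫ s in (0:ℝ)..1, F (x, s) := by
    intro x hx
    have hw : ∀ s : ℝ, pt x 0 + s • v = pt (x + s*z1) (s*z2) := by
      intro s; rw [hv, pt_line]; norm_num
    have hderiv : ∀ s ∈ uIcc (0:ℝ) 1, HasDerivAt (fun t => u (pt x 0 + t • v)) (F (x, s)) s := by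
      intro s hs
      rw [uIcc_of_le zero_le_one] at hs
      have hmemU : pt x 0 + s • v ∈ U := by rw [hw]; exact hAU (hmem x hx s hs)
      have hdu : DifferentiableAt ℝ u (pt x 0 + s • v) :=
        (hu.differentiableOn one_ne_zero).differentiableAt (hU.mem_nhds hmemU)
      have hγ : HasDerivAt (fun t : ℝ => pt x 0 + t • v) v s := by
        simpa using ((hasDerivAt_id s).smul_const v).const_add (pt x 0)
      have h := hdu.hasFDerivAt.comp_hasDerivAt s hγ
      simpa [hFdef, hD, hPdef, hw s, Function.comp_def] using h
    have hint : IntervalIntegrable (fun s => F (x, s)) volume 0 1 := by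
      apply ContinuousOn.intervalIntegrable
      rw [uIcc_of_le zero_le_one]
      have : ContinuousOn (fun s : ℝ => (x, s)) (Icc (0:ℝ) 1) := by fun_prop
      exact hFcont.comp this (fun s hs => ⟨hx, hs⟩)
    have h := intervalIntegral.integral_eq_sub_of_hasDerivAt hderiv hint
    rw [h]
    have e1 : pt x 0 + (1:ℝ) • v = pt (x + z1) z2 := by rw [hw]; norm_num
    have e0 : pt x 0 + (0:ℝ) • v = pt x 0 := by rw [hw]; norm_num
    rw [e1, e0]
  -- interval integrability of the two boundary integrands
  have hInt1 : IntervalIntegrable (fun x => u (pt (x+z1) z2)) volume 0 l := by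
    apply ContinuousOn.intervalIntegrable
    rw [uIcc_of_le hl']
    refine hucont.comp (continuous_pt (by fun_prop) (by fun_prop)).continuousOn ?_
    intro x hx
    show pt (x + z1) z2 ∈ U
    have h : pt (x + z1) z2 = pt (x + (1:ℝ)*z1) ((1:ℝ)*z2) := by norm_num
    rw [h]
    exact hAU (hmem x hx 1 (by norm_num))
  have hInt2 : IntervalIntegrable (fun x => u (pt x 0)) volume 0 l := by
    apply ContinuousOn.intervalIntegrable
    rw [uIcc_of_le hl']
    refine hucont.comp (continuous_pt (by fun_prop) (by fun_prop)).continuousOn ?_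
    intro x hx
    show pt x 0 ∈ U
    have h : pt x 0 = pt (x + (0:ℝ)*z1) ((0:ℝ)*z2) := by norm_num
    rw [h]
    exact hAU (hmem x hx 0 (by norm_num))
  have h1 : (∫ x in (0:ℝ)..l, u (pt (x + z1) z2)) - ∫ x in (0:ℝ)..l, u (pt x 0)
      = ∫ x in (0:ℝ)..l, (u (pt (x+z1) z2) - u (pt x 0)) :=
    (intervalIntegral.integral_sub hInt1 hInt2).symm
  have h2 : ∫ x in (0:ℝ)..l, (u (pt (x+z1) z2) - u (pt x 0))
      = ∫ x in (0:ℝ)..l, ∫ s in (0:ℝ)..1, F (x, s) := by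
    apply intervalIntegral.integral_congr
    intro x hx; rw [uIcc_of_le hl'] at hx; exact key x hx
  -- Fubini
  have hSmeas : MeasurableSet S := measurableSet_Icc.prod measurableSet_Icc
  have hScomp : IsCompact S := isCompact_Icc.prod isCompact_Icc
  have hFint : IntegrableOn F S := hFcont.integrableOn_compact hScomp
  have hGint : IntegrableOn G S := hGcont.integrableOn_compact hScomp
  have h3 : (∫ x in (0:ℝ)..l, ∫ s in (0:ℝ)..1, F (x, s)) = ∫ q in S, F q := by
    have hFint' : IntegrableOn F S (volume.prod volume) := by
      rwa [← Measure.volume_eq_prod]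
    rw [hSdef, Measure.volume_eq_prod, setIntegral_prod F hFint']
    rw [intervalIntegral.integral_of_le hl', ← integral_Icc_eq_integral_Ioc]
    refine setIntegral_congr_fun measurableSet_Icc fun x _ => ?_
    rw [intervalIntegral.integral_of_le zero_le_one, ← integral_Icc_eq_integral_Ioc]
  have h4 : |∫ q in S, F q| ≤ ‖v‖ * ∫ q in S, G q := by
    calc |∫ q in S, F q| ≤ ∫ q in S, |F q| := by
          simpa [Real.norm_eq_abs] using norm_integral_le_integral_norm (μ := volume.restrict S) F
      _ ≤ ∫ q in S, ‖v‖ * G q := by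
          refine setIntegral_mono_on hFint.abs (hGint.const_mul ‖v‖) hSmeas fun q hq => ?_
          calc |F q| = ‖(D (P q)) v‖ := (Real.norm_eq_abs _).symm
            _ ≤ ‖D (P q)‖ * ‖v‖ := (D (P q)).le_opNorm v
            _ = ‖v‖ * G q := mul_comm _ _
      _ = ‖v‖ * ∫ q in S, G q := integral_const_mul _ _
  -- change of variables
  set TC : EuclideanSpace ℝ (Fin 2) →L[ℝ] EuclideanSpace ℝ (Fin 2) :=
    LinearMap.toContinuousLinearMap (Tmap z1 z2) with hTCdef
  have hTCapp : ∀ p, TC p = pt (p 0 + p 1 * z1) (p 1 * z2) := fun p => rfl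
  set K : Set (EuclideanSpace ℝ (Fin 2)) := {p | p 0 ∈ Icc (0:ℝ) l ∧ p 1 ∈ Icc (0:ℝ) 1} with hKdef
  set φ : EuclideanSpace ℝ (Fin 2) ≃ᵐ (ℝ × ℝ) :=
    (MeasurableEquiv.toLp 2 (Fin 2 → ℝ)).symm.trans MeasurableEquiv.finTwoArrow with hφdef
  have hφapp : ∀ p, φ p = (p 0, p 1) := fun p => rfl
  have hφmp : MeasurePreserving φ volume volume := by
    have := (volume_preserving_finTwoArrow ℝ).comp
      (EuclideanSpace.volume_preserving_symm_measurableEquiv_toLp (Fin 2))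
    exact this
  have hKpre : K = φ ⁻¹' S := by
    ext p
    simp only [hKdef, hSdef, mem_setOf_eq, mem_preimage, hφapp p, Set.mem_prod]
  have hKmeas : MeasurableSet K := by
    rw [hKpre]; exact φ.measurable hSmeas
  have hAimg : A = TC '' K := by
    rw [hA]; ext p
    constructor
    · rintro ⟨x, hx, s, hs, rfl⟩
      refine ⟨pt x s, ⟨?_, ?_⟩, ?_⟩
      · simpa [pt] using hx
      · simpa [pt] using hs
      · rw [hTCapp]; rfl
    · rintro ⟨q, ⟨hq0, hq1⟩, rfl⟩
      exact ⟨q 0, hq0, q 1, hq1, (hTCapp q)⟩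
  have hdet : (TC.det : ℝ) = z2 := by
    have : (TC : EuclideanSpace ℝ (Fin 2) →ₗ[ℝ] EuclideanSpace ℝ (Fin 2)) = Tmap z1 z2 :=
      LinearMap.coe_toContinuousLinearMap (Tmap z1 z2)
    rw [ContinuousLinearMap.det, this, det_Tmap]
  have hinj : InjOn TC K := by
    intro p hp q hq hpq
    have e : pt (p 0 + p 1 * z1) (p 1 * z2) = pt (q 0 + q 1 * z1) (q 1 * z2) := by
      rw [← hTCapp p, ← hTCapp q]; exact hpq
    have h1 : p 1 = q 1 := by
      have h2 : p 1 * z2 = q 1 * z2 := congrArg (fun w => w 1) e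
      exact mul_right_cancel₀ hz2.ne' h2
    have h0 : p 0 = q 0 := by
      have h2 : p 0 + p 1 * z1 = q 0 + q 1 * z1 := congrArg (fun w => w 0) e
      rw [h1] at h2; linarith
    ext i; fin_cases i
    · exact h0
    · exact h1
  have h5 : (∫ p in A, ‖D p‖) = z2 * ∫ p in K, ‖D (TC p)‖ := by
    rw [hAimg,
      integral_image_eq_integral_abs_det_fderiv_smul volume hKmeas
        (fun p _ => TC.hasFDerivAt.hasFDerivWithinAt) hinj (fun p => ‖D p‖)]
    simp only [hdet, abs_of_pos hz2, smul_eq_mul]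
    rw [integral_const_mul]
  have h6 : (∫ p in K, ‖D (TC p)‖) = ∫ q in S, G q := by
    rw [hKpre]
    have h := hφmp.setIntegral_preimage_emb φ.measurableEmbedding G S
    rw [← h]
    refine setIntegral_congr_fun (φ.measurable hSmeas) fun p _ => ?_
    simp only [hGdef, hφapp p, hPdef, hTCapp]
  -- conclusion
  have hfinal : (Real.sqrt (z1 ^ 2 + z2 ^ 2) / z2) * ∫ p in A, ‖fderiv ℝ u p‖
      = ‖v‖ * ∫ q in S, G q := by
    rw [show (∫ p in A, ‖fderiv ℝ u p‖) = ∫ p in A, ‖D p‖ from rfl, h5, h6, hnv]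
    field_simp
  rw [h1, h2, h3, hfinal]
  exact h4
end
end

section
/- Let u be a C^1 function on an open set containing the closed parallelogram A spanned by ξ = [0,l]×{0} and z = (z1,z2) with z2 > 0. Then |∫_0^l u(x,0) dx| ≤ (1/z2) ∫_A |u| dx dy + (|z|/z2) ∫_A |∇u| dx dy. -/
open Set MeasureTheory Real

noncomputable section

@[simp] lemma pt_apply_zero (x y : ℝ) : pt x y 0 = x := rfl
@[simp] lemma pt_apply_one (x y : ℝ) : pt x y 1 = y := rfl

lemma pt_continuous : Continuous (fun q : ℝ × ℝ => pt q.1 q.2) := by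
  unfold pt
  exact (PiLp.continuous_toLp 2 _).comp
    (continuous_pi fun i => by fin_cases i <;> dsimp <;> fun_prop)

lemma pt_norm (x y : ℝ) : ‖pt x y‖ = Real.sqrt (x ^ 2 + y ^ 2) := by
  rw [EuclideanSpace.norm_eq]
  simp [Fin.sum_univ_two, sq]

/-- The shear-scaling linear map `(x, s) ↦ (x + s z1, s z2)` on the Euclidean plane. -/
def Phi (z1 z2 : ℝ) : EuclideanSpace ℝ (Fin 2) →ₗ[ℝ] EuclideanSpace ℝ (Fin 2) where
  toFun p := pt (p 0 + p 1 * z1) (p 1 * z2)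
  map_add' p q := by ext i; fin_cases i <;> simp [pt] <;> ring
  map_smul' c p := by ext i; fin_cases i <;> simp [pt] <;> ring

lemma Phi_det (z1 z2 : ℝ) : LinearMap.det (Phi z1 z2) = z2 := by
  let b := (EuclideanSpace.basisFun (Fin 2) ℝ).toBasis
  rw [← LinearMap.det_toMatrix b]
  have : LinearMap.toMatrix b b (Phi z1 z2) = !![1, z1; 0, z2] := by
    ext i j
    fin_cases i <;> fin_cases j <;>
      simp [LinearMap.toMatrix_apply, OrthonormalBasis.coe_toBasis_repr_apply,
        OrthonormalBasis.repr_apply_apply, OrthonormalBasis.coe_toBasis,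
        EuclideanSpace.basisFun_apply, Phi, pt, b, EuclideanSpace.single_apply,
        EuclideanSpace.inner_eq_star_dotProduct]
  rw [this, Matrix.det_fin_two_of]
  ring

lemma Phi_injective {z1 z2 : ℝ} (hz2 : z2 ≠ 0) : Function.Injective (Phi z1 z2) := by
  intro p q h
  have h1 : p 1 = q 1 := by
    have h1' : p 1 * z2 = q 1 * z2 := congrArg (fun v : EuclideanSpace ℝ (Fin 2) => v 1) h
    exact mul_right_cancel₀ hz2 h1'
  have h0 : p 0 = q 0 := by
    have h0' : p 0 + p 1 * z1 = q 0 + q 1 * z1 :=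
      congrArg (fun v : EuclideanSpace ℝ (Fin 2) => v 0) h
    rw [h1] at h0'
    linarith
  ext i; fin_cases i
  · exact h0
  · exact h1

/-- The measurable equivalence of the Euclidean plane with `ℝ × ℝ`. -/
def eqv : EuclideanSpace ℝ (Fin 2) ≃ᵐ ℝ × ℝ :=
  (MeasurableEquiv.toLp 2 (Fin 2 → ℝ)).symm.trans (MeasurableEquiv.finTwoArrow)

lemma eqv_mp : MeasurePreserving (eqv) volume volume :=
  (volume_preserving_finTwoArrow ℝ).comp (EuclideanSpace.volume_preserving_symm_measurableEquiv_toLp (Fin 2))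

lemma eqv_symm_apply (q : ℝ × ℝ) : eqv.symm q = pt q.1 q.2 := by
  ext i; fin_cases i <;> rfl

lemma icc_intervalIntegral {a b : ℝ} (hab : a ≤ b) (f : ℝ → ℝ) :
    ∫ x in Icc a b, f x = ∫ x in a..b, f x := by
  rw [intervalIntegral.integral_of_le hab, integral_Icc_eq_integral_Ioc]

/-- For `u` of class `C¹` on an open set containing the closed parallelogram `A` spanned by
`ξ = [0,l] × {0}` and `z = (z1,z2)` with `z2 > 0`:
`|∫_0^l u(x,0) dx| ≤ (1/z2) ∫_A |u| + (|z|/z2) ∫_A |∇u|`. -/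
theorem segment_integral_estimate (l z1 z2 : ℝ) (hl : 0 < l) (hz2 : 0 < z2)
    (A : Set (EuclideanSpace ℝ (Fin 2)))
    (hA : A = {p | ∃ x ∈ Icc (0:ℝ) l, ∃ s ∈ Icc (0:ℝ) 1, p = pt (x + s * z1) (s * z2)})
    (U : Set (EuclideanSpace ℝ (Fin 2))) (hU : IsOpen U) (hAU : A ⊆ U)
    (u : EuclideanSpace ℝ (Fin 2) → ℝ) (hu : ContDiffOn ℝ 1 u U) :
    |∫ x in (0:ℝ)..l, u (pt x 0)|
      ≤ (1 / z2) * (∫ p in A, |u p|)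
        + (Real.sqrt (z1 ^ 2 + z2 ^ 2) / z2) * ∫ p in A, ‖fderiv ℝ u p‖ := by
  set c := Real.sqrt (z1 ^ 2 + z2 ^ 2) with hc
  set γ : ℝ → ℝ → EuclideanSpace ℝ (Fin 2) := fun x s => pt (x + s * z1) (s * z2) with hγdef
  set Q : Set (ℝ × ℝ) := Icc (0:ℝ) l ×ˢ Icc (0:ℝ) 1 with hQdef
  set R : Set (EuclideanSpace ℝ (Fin 2)) := (fun q : ℝ × ℝ => pt q.1 q.2) '' Q with hRdef
  have hQc : IsCompact Q := isCompact_Icc.prod isCompact_Icc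
  have hRc : IsCompact R := hQc.image pt_continuous
  have hRm : MeasurableSet R := hRc.isClosed.measurableSet
  have hγA : ∀ q ∈ Q, γ q.1 q.2 ∈ A := by
    intro q hq; rw [hA]; exact ⟨q.1, hq.1, q.2, hq.2, rfl⟩
  have hγU : ∀ q ∈ Q, γ q.1 q.2 ∈ U := fun q hq => hAU (hγA q hq)
  have hγcont : Continuous fun q : ℝ × ℝ => γ q.1 q.2 := by
    have h : (fun q : ℝ × ℝ => γ q.1 q.2)
        = (fun q : ℝ × ℝ => pt q.1 q.2) ∘ (fun q : ℝ × ℝ => (q.1 + q.2 * z1, q.2 * z2)) := rfl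
    rw [h]; exact pt_continuous.comp (by fun_prop)
  -- the parallelogram is the image of the rectangle under the shear map
  have hAeq : A = (Phi z1 z2) '' R := by
    rw [hA, hRdef]
    ext p
    constructor
    · rintro ⟨x, hx, s, hs, rfl⟩
      exact ⟨pt x s, ⟨(x, s), ⟨hx, hs⟩, rfl⟩, rfl⟩
    · rintro ⟨_, ⟨⟨x, s⟩, ⟨hx, hs⟩, rfl⟩, rfl⟩
      exact ⟨x, hx, s, hs, rfl⟩
  -- change of variables: integral over A as an integral over the rectangle Q
  have cov : ∀ g : EuclideanSpace ℝ (Fin 2) → ℝ,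
      ∫ p in A, g p = z2 * ∫ q in Q, g (γ q.1 q.2) := by
    intro g
    set Φc := LinearMap.toContinuousLinearMap (Phi z1 z2) with hΦc
    have hcoe : ⇑Φc = ⇑(Phi z1 z2) := LinearMap.coe_toContinuousLinearMap' _
    have hdet : |Φc.det| = z2 := by
      have hl1 : (Φc : EuclideanSpace ℝ (Fin 2) →ₗ[ℝ] EuclideanSpace ℝ (Fin 2))
          = Phi z1 z2 := LinearMap.coe_toContinuousLinearMap _
      rw [ContinuousLinearMap.det, hl1, Phi_det, abs_of_pos hz2]
    have hcv := integral_image_eq_integral_abs_det_fderiv_smul volume hRm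
      (fun x _ => (Φc.hasFDerivAt (x := x)).hasFDerivWithinAt)
      (fun p _ q _ h => by apply Phi_injective hz2.ne'; rw [← hcoe]; exact h) g
    rw [hcoe] at hcv
    rw [← hAeq] at hcv
    rw [hcv]
    have hsymmfun : ⇑eqv.symm = fun q : ℝ × ℝ => pt q.1 q.2 := funext eqv_symm_apply
    have hRim : R = ⇑eqv.symm '' Q := by rw [hRdef, hsymmfun]
    rw [hRim, (eqv_mp.symm eqv).setIntegral_image_emb eqv.symm.measurableEmbedding]
    rw [← integral_const_mul]
    congr 1
    funext q
    rw [hdet, eqv_symm_apply, smul_eq_mul]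
    rfl
  -- continuity facts
  have hcu : ContinuousOn u U := hu.continuousOn
  have hcd : ContinuousOn (fderiv ℝ u) U := hu.continuousOn_fderiv_of_isOpen hU le_rfl
  have hγc2 : ContinuousOn (fun q : ℝ × ℝ => u (γ q.1 q.2)) Q :=
    hcu.comp hγcont.continuousOn hγU
  have hcontFu : ContinuousOn (fun q : ℝ × ℝ => |u (γ q.1 q.2)|) Q := hγc2.abs
  have hcontFd : ContinuousOn (fun q : ℝ × ℝ => ‖fderiv ℝ u (γ q.1 q.2)‖) Q :=
    (hcd.comp hγcont.continuousOn hγU).norm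
  -- iterated integrals over the rectangle
  have prodInt : ∀ f : ℝ × ℝ → ℝ, ContinuousOn f Q →
      Integrable (fun z : ℝ × ℝ => f z)
        (((volume : Measure ℝ).restrict (Icc 0 l)).prod
          ((volume : Measure ℝ).restrict (Icc 0 1))) := by
    intro f hf
    rw [Measure.prod_restrict, ← Measure.volume_eq_prod]
    exact hf.integrableOn_compact hQc
  have hiterIcc : ∀ f : ℝ × ℝ → ℝ, ContinuousOn f Q →
      ∫ q in Q, f q = ∫ x in Icc (0:ℝ) l, ∫ s in Icc (0:ℝ) 1, f (x, s) := by
    intro f hf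
    have h1 : IntegrableOn f (Icc (0:ℝ) l ×ˢ Icc (0:ℝ) 1) ((volume : Measure ℝ).prod volume) := by
      rw [← Measure.volume_eq_prod]; exact hf.integrableOn_compact hQc
    rw [hQdef, Measure.volume_eq_prod, setIntegral_prod f h1]
  have hswapIcc : ∀ f : ℝ × ℝ → ℝ, ContinuousOn f Q →
      ∫ q in Q, f q = ∫ s in Icc (0:ℝ) 1, ∫ x in Icc (0:ℝ) l, f (x, s) := by
    intro f hf
    rw [hiterIcc f hf]
    exact integral_integral_swap (prodInt f hf)
  -- the norm of the direction vector
  set v : EuclideanSpace ℝ (Fin 2) := pt z1 z2 with hv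
  have hvnorm : ‖v‖ = c := pt_norm z1 z2
  -- the inner gradient integral
  set G : ℝ → ℝ := fun x => ∫ t in Icc (0:ℝ) 1, ‖fderiv ℝ u (γ x t)‖ with hGdef
  -- fundamental theorem of calculus estimate
  have key : ∀ x ∈ Icc (0:ℝ) l, ∀ s ∈ Icc (0:ℝ) 1,
      |u (γ x s) - u (pt x 0)| ≤ c * G x := by
    intro x hx s hs
    have hmemU : ∀ t ∈ Icc (0:ℝ) 1, γ x t ∈ U := fun t ht => hγU (x, t) ⟨hx, ht⟩
    have hγ_eq : (fun t : ℝ => γ x t) = fun t => pt x 0 + t • v := by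
      funext t; ext i; fin_cases i <;>
        simp [hγdef, hv, pt, PiLp.add_apply, PiLp.smul_apply] <;> ring
    have hcurve : ∀ t : ℝ, HasDerivAt (fun t => γ x t) v t := by
      intro t
      rw [hγ_eq]
      simpa using ((hasDerivAt_id t).smul_const v).const_add (pt x 0)
    have hd : ∀ t ∈ Icc (0:ℝ) 1, HasDerivAt (fun t => u (γ x t)) ((fderiv ℝ u (γ x t)) v) t := by
      intro t ht
      have hdiff : DifferentiableAt ℝ u (γ x t) :=
        (hu.differentiableOn one_ne_zero).differentiableAt (hU.mem_nhds (hmemU t ht))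
      exact hdiff.hasFDerivAt.comp_hasDerivAt t (hcurve t)
    have hγxc : Continuous fun t : ℝ => γ x t := by
      rw [hγ_eq]; fun_prop
    have hcontd : ContinuousOn (fun t => (fderiv ℝ u (γ x t)) v) (Icc (0:ℝ) 1) :=
      (hcd.comp hγxc.continuousOn hmemU).clm_apply continuousOn_const
    have hcontn : ContinuousOn (fun t => ‖fderiv ℝ u (γ x t)‖ * c) (Icc (0:ℝ) 1) :=
      ((hcd.comp hγxc.continuousOn hmemU).norm).mul continuousOn_const
    have hsub : Icc (0:ℝ) s ⊆ Icc (0:ℝ) 1 := Icc_subset_Icc le_rfl hs.2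
    have hFTC : u (γ x s) - u (γ x 0) = ∫ t in (0:ℝ)..s, (fderiv ℝ u (γ x t)) v := by
      have hd' : ∀ t ∈ uIcc (0:ℝ) s, HasDerivAt (fun t => u (γ x t)) ((fderiv ℝ u (γ x t)) v) t :=
        fun t ht => hd t (hsub (by rwa [uIcc_of_le hs.1] at ht))
      have hint' : IntervalIntegrable (fun t => (fderiv ℝ u (γ x t)) v) volume 0 s :=
        (hcontd.mono (by rw [uIcc_of_le hs.1]; exact hsub)).intervalIntegrable
      exact (intervalIntegral.integral_eq_sub_of_hasDerivAt hd' hint').symm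
    have hγx0 : γ x 0 = pt x 0 := by ext i; fin_cases i <;> simp [hγdef, pt]
    rw [← hγx0, hFTC]
    calc |∫ t in (0:ℝ)..s, (fderiv ℝ u (γ x t)) v|
        ≤ ∫ t in (0:ℝ)..s, |(fderiv ℝ u (γ x t)) v| :=
          intervalIntegral.abs_integral_le_integral_abs hs.1
      _ ≤ ∫ t in (0:ℝ)..s, ‖fderiv ℝ u (γ x t)‖ * c := by
          refine intervalIntegral.integral_mono_on hs.1 ?_ ?_ (fun t ht => ?_)
          · exact ((hcontd.mono hsub).abs.mono (by rw [uIcc_of_le hs.1])).intervalIntegrable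
          · exact ((hcontn.mono hsub).mono (by rw [uIcc_of_le hs.1])).intervalIntegrable
          · rw [← hvnorm]
            exact (fderiv ℝ u (γ x t)).le_opNorm v
      _ ≤ ∫ t in (0:ℝ)..1, ‖fderiv ℝ u (γ x t)‖ * c := by
          refine intervalIntegral.integral_mono_interval le_rfl hs.1 hs.2
            (Filter.Eventually.of_forall fun t =>
              mul_nonneg (norm_nonneg _) (Real.sqrt_nonneg _)) ?_
          exact (hcontn.mono (by rw [uIcc_of_le zero_le_one])).intervalIntegrable
      _ = c * G x := by
          simp only [hGdef]
          rw [intervalIntegral.integral_mul_const, icc_intervalIntegral zero_le_one]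
          ring
  -- Fubini integrability of the inner integrals
  have hGint : IntegrableOn G (Icc (0:ℝ) l) := by
    have h := (prodInt _ hcontFd).integral_prod_left
    exact h
  have hGiv : IntervalIntegrable G volume 0 l :=
    (intervalIntegrable_iff_integrableOn_Icc_of_le hl.le).mpr hGint
  have hKint : IntegrableOn (fun s => ∫ x in Icc (0:ℝ) l, |u (γ x s)|) (Icc (0:ℝ) 1) := by
    have h := (prodInt _ hcontFu).integral_prod_right
    exact h
  set T := ∫ x in Icc (0:ℝ) l, G x with hT
  -- continuity of sections
  have hγxsc : ∀ s : ℝ, Continuous fun x : ℝ => γ x s := by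
    intro s
    have h : (fun x : ℝ => γ x s) = (fun q : ℝ × ℝ => γ q.1 q.2) ∘ fun x => (x, s) := rfl
    rw [h]; exact hγcont.comp (by fun_prop)
  have h00 : ∀ x : ℝ, pt x 0 = γ x 0 := by
    intro x; ext i; fin_cases i <;> simp [hγdef, pt]
  have husc : ∀ s ∈ Icc (0:ℝ) 1, IntervalIntegrable (fun x => u (γ x s)) volume 0 l := by
    intro s hs
    have hmem : ∀ x ∈ Icc (0:ℝ) l, γ x s ∈ U := fun x hx => hγU (x, s) ⟨hx, hs⟩
    exact ((hcu.comp (hγxsc s).continuousOn hmem).mono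
      (by rw [uIcc_of_le hl.le])).intervalIntegrable
  have hint0 : IntervalIntegrable (fun x => u (pt x 0)) volume 0 l := by
    simp_rw [h00]
    exact husc 0 (by simp)
  -- the per-`s` estimate
  have steps : ∀ s ∈ Icc (0:ℝ) 1,
      |∫ x in (0:ℝ)..l, u (pt x 0)| ≤ (∫ x in Icc (0:ℝ) l, |u (γ x s)|) + c * T := by
    intro s hs
    have hint1 := husc s hs
    have hsplit : ∫ x in (0:ℝ)..l, u (pt x 0)
        = (∫ x in (0:ℝ)..l, u (γ x s)) - ∫ x in (0:ℝ)..l, (u (γ x s) - u (pt x 0)) := by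
      rw [intervalIntegral.integral_sub hint1 hint0]; ring
    rw [hsplit]
    have h1 : |∫ x in (0:ℝ)..l, u (γ x s)| ≤ ∫ x in Icc (0:ℝ) l, |u (γ x s)| := by
      rw [icc_intervalIntegral hl.le]
      exact intervalIntegral.abs_integral_le_integral_abs hl.le
    have h2 : |∫ x in (0:ℝ)..l, (u (γ x s) - u (pt x 0))| ≤ c * T := by
      calc |∫ x in (0:ℝ)..l, (u (γ x s) - u (pt x 0))|
          ≤ ∫ x in (0:ℝ)..l, |u (γ x s) - u (pt x 0)| :=
            intervalIntegral.abs_integral_le_integral_abs hl.le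
        _ ≤ ∫ x in (0:ℝ)..l, c * G x := by
            refine intervalIntegral.integral_mono_on hl.le ((hint1.sub hint0).abs)
              (hGiv.const_mul c) (fun x hx => key x hx s hs)
        _ = c * T := by
            rw [intervalIntegral.integral_const_mul, hT, icc_intervalIntegral hl.le]
    calc |(∫ x in (0:ℝ)..l, u (γ x s)) - ∫ x in (0:ℝ)..l, (u (γ x s) - u (pt x 0))|
        ≤ |∫ x in (0:ℝ)..l, u (γ x s)| + |∫ x in (0:ℝ)..l, (u (γ x s) - u (pt x 0))| :=
          abs_sub _ _
      _ ≤ (∫ x in Icc (0:ℝ) l, |u (γ x s)|) + c * T := add_le_add h1 h2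
  -- average the estimate over s ∈ [0,1]
  have hvol1 : volume.real (Icc (0:ℝ) 1) = 1 := by
    simp [Real.volume_Icc]
  have hconst1 : IntegrableOn (fun _ : ℝ => |∫ x in (0:ℝ)..l, u (pt x 0)|) (Icc (0:ℝ) 1) :=
    (integrableOn_const_iff).mpr (Or.inr (by simp [Real.volume_Icc]))
  have hconst2 : IntegrableOn (fun _ : ℝ => c * T) (Icc (0:ℝ) 1) :=
    (integrableOn_const_iff).mpr (Or.inr (by simp [Real.volume_Icc]))
  have main : |∫ x in (0:ℝ)..l, u (pt x 0)|
      ≤ (∫ s in Icc (0:ℝ) 1, ∫ x in Icc (0:ℝ) l, |u (γ x s)|) + c * T := by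
    have hadd : IntegrableOn (fun s => (∫ x in Icc (0:ℝ) l, |u (γ x s)|) + c * T)
        (Icc (0:ℝ) 1) := hKint.add hconst2
    have h := setIntegral_mono_on hconst1 hadd measurableSet_Icc (fun s hs => steps s hs)
    rw [setIntegral_const, hvol1, one_smul] at h
    rw [integral_add hKint hconst2, setIntegral_const, hvol1, one_smul] at h
    exact h
  -- change of variables identities
  have hu_id : ∫ s in Icc (0:ℝ) 1, ∫ x in Icc (0:ℝ) l, |u (γ x s)|
      = (1 / z2) * ∫ p in A, |u p| := by
    rw [cov (fun p => |u p|)]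
    beta_reduce
    rw [hswapIcc _ hcontFu, ← mul_assoc, one_div, inv_mul_cancel₀ hz2.ne', one_mul]
  have hd_id : T = (1 / z2) * ∫ p in A, ‖fderiv ℝ u p‖ := by
    rw [cov (fun p => ‖fderiv ℝ u p‖)]
    beta_reduce
    rw [hiterIcc _ hcontFd, ← mul_assoc, one_div, inv_mul_cancel₀ hz2.ne', one_mul]
  rw [hu_id, hd_id] at main
  refine main.trans_eq ?_
  ring
end
end

section
/- Poincaré inequality on bounded connected patterns: let Γ = ∪_{i=1}^N γ_i be a finite union of C^1 arcs of finite total length l > 0, such that Γ is connected (any two points of Γ are joined by a piecewise C^1 path along arcs). Then for every u that is H^1 on each arc with matching values at intersection points, ∫_Γ (u − ⟨u⟩)² ds ≤ l² ∫_Γ u_s² ds, where ⟨u⟩ = (1/l)∫_Γ u ds. -/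
open Set MeasureTheory Real

noncomputable section

/-- Cauchy–Schwarz on an interval: `(∫ |f|)² ≤ L · ∫ f²`. -/
private lemma sq_integral_abs_le (L : ℝ) (hL : 0 ≤ L) (f : ℝ → ℝ)
    (hf : ContinuousOn f (Icc 0 L)) :
    (∫ t in (0:ℝ)..L, |f t|) ^ 2 ≤ L * ∫ t in (0:ℝ)..L, (f t) ^ 2 := by
  rcases eq_or_lt_of_le hL with h | hL'
  · simp [← h]
  set A := ∫ t in (0:ℝ)..L, |f t| with hA
  set B := ∫ t in (0:ℝ)..L, (f t) ^ 2 with hB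
  have hint1 : IntervalIntegrable (fun t => |f t|) volume 0 L :=
    hf.abs.intervalIntegrable_of_Icc hL
  have hint2 : IntervalIntegrable (fun t => (f t) ^ 2) volume 0 L :=
    (hf.pow 2).intervalIntegrable_of_Icc hL
  set c := A / L with hc
  have key : (0:ℝ) ≤ ∫ t in (0:ℝ)..L, (|f t| - c) ^ 2 :=
    intervalIntegral.integral_nonneg hL (fun u _ => sq_nonneg _)
  have expand : (∫ t in (0:ℝ)..L, (|f t| - c) ^ 2)
      = B - 2 * c * A + c ^ 2 * L := by
    have h1 : (∫ t in (0:ℝ)..L, (|f t| - c) ^ 2)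
        = ∫ t in (0:ℝ)..L, ((f t) ^ 2 - (2 * c) * |f t| + c ^ 2) := by
      apply intervalIntegral.integral_congr
      intro t _
      dsimp only
      rw [sub_sq, sq_abs]; ring
    rw [h1, intervalIntegral.integral_add ((hint2.sub (hint1.const_mul _)))
        intervalIntegrable_const,
      intervalIntegral.integral_sub hint2 (hint1.const_mul _),
      intervalIntegral.integral_const_mul, intervalIntegral.integral_const]
    simp only [← hA, ← hB, smul_eq_mul, sub_zero]
    ring
  have h0 : 0 ≤ B - 2 * c * A + c ^ 2 * L := expand ▸ key
  have hLne : L ≠ 0 := ne_of_gt hL'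
  have : c * L = A := by rw [hc]; exact div_mul_cancel₀ A hLne
  nlinarith [sq_nonneg (A - c * L)]

/-- Oscillation bound on one arc: `|f t - f s| ≤ ∫₀ᴸ |f'|`. -/
private lemma osc_le (L : ℝ) (hL : 0 < L) (f : ℝ → ℝ) (hf : ContDiffOn ℝ 1 f (Icc 0 L))
    {s t : ℝ} (hs : s ∈ Icc (0:ℝ) L) (ht : t ∈ Icc (0:ℝ) L) :
    |f t - f s| ≤ ∫ τ in (0:ℝ)..L, |derivWithin f (Icc 0 L) τ| := by
  set f' := derivWithin f (Icc 0 L) with hf'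
  have hud : UniqueDiffOn ℝ (Icc (0:ℝ) L) := uniqueDiffOn_Icc hL
  have hf'c : ContinuousOn f' (Icc 0 L) := hf.continuousOn_derivWithin hud le_rfl
  have habs : IntervalIntegrable (fun τ => |f' τ|) volume 0 L :=
    hf'c.abs.intervalIntegrable_of_Icc hL.le
  have main : ∀ a b : ℝ, a ∈ Icc (0:ℝ) L → b ∈ Icc (0:ℝ) L → a ≤ b →
      |f b - f a| ≤ ∫ τ in (0:ℝ)..L, |f' τ| := by
    intro a b ha hb hab
    have hcont : ContinuousOn f (Icc a b) := hf.continuousOn.mono (Icc_subset_Icc ha.1 hb.2)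
    have hderiv : ∀ x ∈ Ioo a b, HasDerivWithinAt f (f' x) (Ioi x) x := by
      intro x hx
      have hx' : x ∈ Ioo (0:ℝ) L := ⟨lt_of_le_of_lt ha.1 hx.1, lt_of_lt_of_le hx.2 hb.2⟩
      have hdw : HasDerivWithinAt f (f' x) (Icc 0 L) x :=
        (hf.differentiableOn one_ne_zero x (Ioo_subset_Icc_self hx')).hasDerivWithinAt
      exact (hdw.hasDerivAt (Icc_mem_nhds hx'.1 hx'.2)).hasDerivWithinAt
    have hint : IntervalIntegrable f' volume a b :=
      (hf'c.mono (Icc_subset_Icc ha.1 hb.2)).intervalIntegrable_of_Icc hab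
    have heq : ∫ τ in a..b, f' τ = f b - f a :=
      intervalIntegral.integral_eq_sub_of_hasDeriv_right_of_le hab hcont hderiv hint
    calc |f b - f a| = |∫ τ in a..b, f' τ| := by rw [heq]
      _ ≤ ∫ τ in a..b, |f' τ| := intervalIntegral.abs_integral_le_integral_abs hab
      _ ≤ ∫ τ in (0:ℝ)..L, |f' τ| :=
          intervalIntegral.integral_mono_interval ha.1 hab hb.2
            (Filter.Eventually.of_forall fun x => abs_nonneg _) habs
  rcases le_total s t with h | h
  · exact main s t hs ht h
  · rw [abs_sub_comm]; exact main t s ht hs h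

/-- Poincaré inequality on bounded connected patterns: let `Γ = ⋃ γ_i([0, L i])` be a finite
connected union of `C¹` arcs parametrized by arc length, of total length `l = ∑ L i`. Then
for every `u` that is `H¹` on each arc (values automatically match at intersections, since
`u` is defined on the plane),
`∫_Γ (u − ⟨u⟩)² ds ≤ l² ∫_Γ u_s² ds`, where `⟨u⟩ = (1/l) ∫_Γ u ds`. -/
theorem pattern_poincare_inequality (N : ℕ) (hN : 0 < N) (L : Fin N → ℝ)
    (hL : ∀ i, 0 < L i)
    (γ : Fin N → ℝ → EuclideanSpace ℝ (Fin 2))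
    (hγ : ∀ i, ContDiffOn ℝ 1 (γ i) (Icc 0 (L i)))
    (hunit : ∀ i, ∀ t ∈ Icc (0:ℝ) (L i), ‖derivWithin (γ i) (Icc 0 (L i)) t‖ = 1)
    (hconn : IsConnected (⋃ i, γ i '' Icc 0 (L i)))
    (u : EuclideanSpace ℝ (Fin 2) → ℝ)
    (hu : ∀ i, ContDiffOn ℝ 1 (u ∘ γ i) (Icc 0 (L i)))
    (l : ℝ) (hl : l = ∑ i, L i) :
    ∑ i, (∫ t in (0:ℝ)..(L i),
        (u (γ i t) - (∑ j, ∫ t in (0:ℝ)..(L j), u (γ j t)) / l) ^ 2)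
      ≤ l ^ 2 * ∑ i, ∫ t in (0:ℝ)..(L i),
          (derivWithin (u ∘ γ i) (Icc 0 (L i)) t) ^ 2 := by
  haveI : Nonempty (Fin N) := ⟨⟨0, hN⟩⟩
  set K : Fin N → Set (EuclideanSpace ℝ (Fin 2)) := fun i => γ i '' Icc 0 (L i) with hKdef
  set Γ : Set (EuclideanSpace ℝ (Fin 2)) := ⋃ i, K i with hΓdef
  set E : Fin N → ℝ := fun k => ∫ t in (0:ℝ)..(L k), |derivWithin (u ∘ γ k) (Icc 0 (L k)) t|
    with hEdef
  set R : Fin N → ℝ := fun k => ∫ t in (0:ℝ)..(L k), (derivWithin (u ∘ γ k) (Icc 0 (L k)) t) ^ 2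
    with hRdef
  set D : ℝ := ∑ k, E k with hDdef
  have hl0 : 0 < l := by
    rw [hl]; exact Finset.sum_pos (fun i _ => hL i) Finset.univ_nonempty
  have hEnonneg : ∀ k, 0 ≤ E k :=
    fun k => intervalIntegral.integral_nonneg (hL k).le (fun t _ => abs_nonneg _)
  have hRnonneg : ∀ k, 0 ≤ R k :=
    fun k => intervalIntegral.integral_nonneg (hL k).le (fun t _ => sq_nonneg _)
  have hDnonneg : 0 ≤ D := Finset.sum_nonneg fun k _ => hEnonneg k
  have hE2 : ∀ k, (E k) ^ 2 ≤ L k * R k := fun k =>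
    sq_integral_abs_le (L k) (hL k).le _
      ((hu k).continuousOn_derivWithin (uniqueDiffOn_Icc (hL k)) le_rfl)
  have hKne : ∀ i, (K i).Nonempty := fun i =>
    ⟨γ i 0, mem_image_of_mem _ ⟨le_refl _, (hL i).le⟩⟩
  have hKclosed : ∀ i, IsClosed (K i) := fun i =>
    (isCompact_Icc.image_of_continuousOn (hγ i).continuousOn).isClosed
  have hKsub : ∀ i, K i ⊆ Γ := fun i => subset_iUnion K i
  -- the intersection graph of the arcs
  let G : SimpleGraph (Fin N) :=
    { Adj := fun i j => i ≠ j ∧ (K i ∩ K j).Nonempty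
      symm := ⟨fun i j h => ⟨h.1.symm, let ⟨x, hx⟩ := h.2; ⟨x, hx.2, hx.1⟩⟩⟩
      loopless := ⟨fun i h => h.1 rfl⟩ }
  have hconn' : IsPreconnected Γ := hconn.isPreconnected
  have hreach : ∀ i j, G.Reachable i j := by
    intro i j
    by_contra hij
    set A := ⋃ k ∈ {k | G.Reachable i k}, K k with hAdef
    set B := ⋃ k ∈ {k | ¬ G.Reachable i k}, K k with hBdef
    have hAclosed : IsClosed A := (Set.toFinite _).isClosed_biUnion (fun k _ => hKclosed k)
    have hBclosed : IsClosed B := (Set.toFinite _).isClosed_biUnion (fun k _ => hKclosed k)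
    have hcover : Γ ⊆ A ∪ B := by
      intro x hx
      obtain ⟨k, hk⟩ := mem_iUnion.1 hx
      by_cases h : G.Reachable i k
      · exact Or.inl (mem_biUnion h hk)
      · exact Or.inr (mem_biUnion h hk)
    have hdisj : Γ ∩ (A ∩ B) = ∅ := by
      ext x
      simp only [mem_inter_iff, mem_empty_iff_false, iff_false]
      rintro ⟨hxΓ, hxA, hxB⟩
      obtain ⟨k1, hk1, hx1⟩ := mem_iUnion₂.1 hxA
      obtain ⟨k2, hk2, hx2⟩ := mem_iUnion₂.1 hxB
      by_cases hkk : k1 = k2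
      · exact hk2 (hkk ▸ hk1)
      · exact hk2 (hk1.trans (SimpleGraph.Adj.reachable ⟨hkk, ⟨x, hx1, hx2⟩⟩))
    obtain hsub | hsub :=
      (isPreconnected_iff_subset_of_disjoint_closed.1 hconn') A B hAclosed hBclosed hcover hdisj
    · obtain ⟨y, hy⟩ := hKne j
      have hyA : y ∈ A := hsub (hKsub j hy)
      obtain ⟨k, hk, hyk⟩ := mem_iUnion₂.1 hyA
      by_cases hkj : k = j
      · exact hij (hkj ▸ hk)
      · exact hij (hk.trans (SimpleGraph.Adj.reachable ⟨hkj, ⟨y, hyk, hy⟩⟩))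
    · obtain ⟨x, hx⟩ := hKne i
      have hxB : x ∈ B := hsub (hKsub i hx)
      obtain ⟨k, hk, hxk⟩ := mem_iUnion₂.1 hxB
      by_cases hki : k = i
      · subst hki; exact hk (SimpleGraph.Reachable.refl k)
      · exact hk (SimpleGraph.Adj.reachable ⟨fun h => hki h.symm, ⟨x, hx, hxk⟩⟩)
  -- bound along a walk
  have harc : ∀ (i : Fin N) (x y : EuclideanSpace ℝ (Fin 2)), x ∈ K i → y ∈ K i →
      |u x - u y| ≤ E i := by
    intro i x y hx hy
    obtain ⟨s, hs, rfl⟩ := hx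
    obtain ⟨t, ht, rfl⟩ := hy
    exact osc_le (L i) (hL i) (u ∘ γ i) (hu i) ht hs
  have hwalk : ∀ (i j : Fin N) (w : G.Walk i j) (x y : EuclideanSpace ℝ (Fin 2)),
      x ∈ K i → y ∈ K j → |u x - u y| ≤ (w.support.map E).sum := by
    intro i j w
    induction w with
    | nil =>
      intro x y hx hy
      simpa using harc _ x y hx hy
    | @cons a b c h p ih =>
      intro x y hx hy
      obtain ⟨z, hz1, hz2⟩ := h.2
      calc |u x - u y| ≤ |u x - u z| + |u z - u y| := abs_sub_le _ _ _
        _ ≤ E a + (p.support.map E).sum := add_le_add (harc a x z hx hz1) (ih z y hz2 hy)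
        _ = ((SimpleGraph.Walk.cons h p).support.map E).sum := by
            simp [SimpleGraph.Walk.support_cons]
  -- oscillation bound on all of Γ
  have hosc : ∀ x ∈ Γ, ∀ y ∈ Γ, |u x - u y| ≤ D := by
    intro x hx y hy
    obtain ⟨i, hxi⟩ := mem_iUnion.1 hx
    obtain ⟨j, hyj⟩ := mem_iUnion.1 hy
    obtain ⟨w⟩ := hreach i j
    have hnd : w.toPath.1.support.Nodup := w.toPath.2.support_nodup
    calc |u x - u y| ≤ (w.toPath.1.support.map E).sum := hwalk i j w.toPath.1 x y hxi hyj
      _ = ∑ k ∈ w.toPath.1.support.toFinset, E k := (List.sum_toFinset E hnd).symm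
      _ ≤ ∑ k, E k :=
          Finset.sum_le_sum_of_subset_of_nonneg (Finset.subset_univ _)
            (fun k _ _ => hEnonneg k)
  -- the mean
  set m : ℝ := (∑ j, ∫ t in (0:ℝ)..(L j), u (γ j t)) / l with hmdef
  have hmean : ∀ i, ∀ t ∈ Icc (0:ℝ) (L i), |u (γ i t) - m| ≤ D := by
    intro i t htI
    have hxt : γ i t ∈ Γ := hKsub i (mem_image_of_mem _ htI)
    have hterm : ∀ j, |L j * u (γ i t) - ∫ s in (0:ℝ)..(L j), u (γ j s)| ≤ L j * D := by
      intro j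
      have hcj : ContinuousOn (fun s => u (γ j s)) (Icc 0 (L j)) := (hu j).continuousOn
      have h1 : L j * u (γ i t) - ∫ s in (0:ℝ)..(L j), u (γ j s)
          = ∫ s in (0:ℝ)..(L j), (u (γ i t) - u (γ j s)) := by
        rw [intervalIntegral.integral_sub intervalIntegrable_const
            (hcj.intervalIntegrable_of_Icc (hL j).le), intervalIntegral.integral_const]
        simp [smul_eq_mul]
      rw [h1]
      have hintabs : IntervalIntegrable (fun s => |u (γ i t) - u (γ j s)|) volume 0 (L j) :=
        ((continuousOn_const.sub hcj).abs).intervalIntegrable_of_Icc (hL j).le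
      calc |∫ s in (0:ℝ)..(L j), (u (γ i t) - u (γ j s))|
          ≤ ∫ s in (0:ℝ)..(L j), |u (γ i t) - u (γ j s)| :=
            intervalIntegral.abs_integral_le_integral_abs (hL j).le
        _ ≤ ∫ _s in (0:ℝ)..(L j), D :=
            intervalIntegral.integral_mono_on (hL j).le hintabs intervalIntegrable_const
              (fun s hsI => hosc _ hxt _ (hKsub j (mem_image_of_mem _ hsI)))
        _ = L j * D := by simp [smul_eq_mul]
    have hm : l * m = ∑ j, ∫ s in (0:ℝ)..(L j), u (γ j s) := by
      rw [hmdef, mul_div_assoc']; exact mul_div_cancel_left₀ _ hl0.ne'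
    have h2 : l * (u (γ i t) - m)
        = ∑ j, (L j * u (γ i t) - ∫ s in (0:ℝ)..(L j), u (γ j s)) := by
      rw [Finset.sum_sub_distrib, ← Finset.sum_mul, ← hl, ← hm, mul_sub]
    have h3 : |l * (u (γ i t) - m)| ≤ l * D := by
      rw [h2]
      calc |∑ j, (L j * u (γ i t) - ∫ s in (0:ℝ)..(L j), u (γ j s))|
          ≤ ∑ j, |L j * u (γ i t) - ∫ s in (0:ℝ)..(L j), u (γ j s)| :=
            Finset.abs_sum_le_sum_abs _ _
        _ ≤ ∑ j, L j * D := Finset.sum_le_sum fun j _ => hterm j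
        _ = l * D := by rw [← Finset.sum_mul, ← hl]
    rw [abs_mul, abs_of_pos hl0] at h3
    exact le_of_mul_le_mul_left h3 hl0
  -- Cauchy–Schwarz over the arcs
  have hD2 : D ^ 2 ≤ l * ∑ k, R k := by
    have h1 : D ≤ ∑ k, Real.sqrt (L k) * Real.sqrt (R k) := by
      rw [hDdef]
      refine Finset.sum_le_sum fun k _ => ?_
      rw [← Real.sqrt_mul (hL k).le]
      exact Real.le_sqrt_of_sq_le (hE2 k)
    have h2 : ∑ k, Real.sqrt (L k) * Real.sqrt (R k)
        ≤ Real.sqrt (∑ k, L k) * Real.sqrt (∑ k, R k) :=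
      Real.sum_sqrt_mul_sqrt_le _ (fun k => (hL k).le) (fun k => hRnonneg k)
    have h3 : D ≤ Real.sqrt l * Real.sqrt (∑ k, R k) := by
      rw [hl]; exact h1.trans h2
    calc D ^ 2 ≤ (Real.sqrt l * Real.sqrt (∑ k, R k)) ^ 2 :=
          pow_le_pow_left₀ hDnonneg h3 2
      _ = l * ∑ k, R k := by
          rw [mul_pow, Real.sq_sqrt hl0.le,
            Real.sq_sqrt (Finset.sum_nonneg fun k _ => hRnonneg k)]
  -- conclusion
  calc ∑ i, (∫ t in (0:ℝ)..(L i), (u (γ i t) - m) ^ 2)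
      ≤ ∑ i, L i * D ^ 2 := by
        refine Finset.sum_le_sum fun i _ => ?_
        have hci : ContinuousOn (fun t => (u (γ i t) - m) ^ 2) (Icc 0 (L i)) :=
          (((hu i).continuousOn.sub continuousOn_const).pow 2)
        have hmono : (∫ t in (0:ℝ)..(L i), (u (γ i t) - m) ^ 2)
            ≤ ∫ _t in (0:ℝ)..(L i), D ^ 2 := by
          refine intervalIntegral.integral_mono_on (hL i).le
            (hci.intervalIntegrable_of_Icc (hL i).le) intervalIntegrable_const
            (fun t ht => ?_)
          have h := abs_le.1 (hmean i t ht)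
          exact sq_le_sq' (by linarith [h.1]) h.2
        simpa [smul_eq_mul] using hmono
    _ = l * D ^ 2 := by rw [← Finset.sum_mul, ← hl]
    _ ≤ l * (l * ∑ k, R k) := mul_le_mul_of_nonneg_left hD2 hl0.le
    _ = l ^ 2 * ∑ k, R k := by ring
end
end
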